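/- Let F be a function analytic in a neighborhood of [0,∞) in ℂ with |F(p)| ≤ C(1+|p|)^m for some constants C, m on its domain, and suppose the Taylor coefficients c_k = ∫₀^∞ e^{-kp} F(p) dp for k ≥ 1 (with F real-integrable on (0,∞)). Then for |z| < 1, ∑_{k=1}^∞ c_k z^k = z ∫₀^∞ F(ln(1+s)) / ((1+s)(1+s-z)) ds. -/

import Mathlib

open MeasureTheory Set Real
open scoped ENNReal NNReal

theorem stmt4 (F : ℂ → ℂ) (U : Set ℂ) (hU : IsOpen U)
    (hsub : {z : ℂ | z.im = 0 ∧ 0 ≤ z.re} ⊆ U)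
    (hF : AnalyticOnNhd ℂ F U)
    (C : ℝ) (m : ℕ) (hbound : ∀ z ∈ U, ‖F z‖ ≤ C * (1 + ‖z‖) ^ m)
    (hint : IntegrableOn (fun p : ℝ => F p) (Ioi 0))
    (c : ℕ → ℂ)
    (hc : ∀ k : ℕ, 1 ≤ k → c k = ∫ p in Ioi (0 : ℝ), Complex.exp (-(k : ℂ) * p) * F p)
    (z : ℂ) (hz : ‖z‖ < 1) :
    ∑' k : ℕ, c (k + 1) * z ^ (k + 1) =
      z * ∫ s in Ioi (0 : ℝ),
        F (Real.log (1 + s)) / (((1 + s : ℝ) : ℂ) * (((1 + s : ℝ) : ℂ) - z)) := by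
  set f : ℕ → ℝ → ℂ := fun k p => Complex.exp (-((k + 1 : ℕ) : ℂ) * p) * F p * z ^ (k + 1)
    with hf_def
  set g : ℝ → ℂ := fun p =>
    z * Complex.exp (-(p : ℂ)) * (1 - z * Complex.exp (-(p : ℂ)))⁻¹ * F p with hg_def
  -- norm of z * exp(-p) is < 1 for p ≥ 0
  have hw : ∀ p : ℝ, 0 ≤ p → ‖z * Complex.exp (-(p : ℂ))‖ < 1 := by
    intro p hp
    rw [norm_mul, Complex.norm_exp]
    have h1 : (-(p : ℂ)).re = -p := by simp
    rw [h1]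
    have h2 : Real.exp (-p) ≤ 1 := exp_le_one_iff.mpr (by linarith)
    calc ‖z‖ * Real.exp (-p) ≤ ‖z‖ * 1 :=
          mul_le_mul_of_nonneg_left h2 (norm_nonneg z)
      _ = ‖z‖ := mul_one _
      _ < 1 := hz
  -- Step A: rewrite each term as an integral
  have stepA : ∀ k : ℕ, c (k + 1) * z ^ (k + 1) = ∫ p in Ioi (0 : ℝ), f k p := by
    intro k
    rw [hc (k + 1) (by omega)]
    exact (integral_mul_const _ _).symm
  -- measurability
  have hFm : AEStronglyMeasurable (fun p : ℝ => F p) (volume.restrict (Ioi 0)) :=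
    hint.aestronglyMeasurable
  have hfm : ∀ k : ℕ, AEStronglyMeasurable (f k) (volume.restrict (Ioi 0)) := by
    intro k
    exact ((Complex.continuous_exp.comp
      (by continuity : Continuous fun p : ℝ => -((k + 1 : ℕ) : ℂ) * p)).aestronglyMeasurable.mul
      hFm).mul aestronglyMeasurable_const
  -- finiteness of the double (l)integral
  have hI : (∫⁻ p in Ioi (0 : ℝ), ‖F p‖₊) ≠ ⊤ := hint.2.ne
  have hsum : (∑' k : ℕ, ∫⁻ p in Ioi (0 : ℝ), ‖f k p‖₊) ≠ ⊤ := by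
    have hr : (‖z‖₊ : ℝ≥0∞) < 1 := by
      rw [← ENNReal.coe_one, ENNReal.coe_lt_coe]
      exact_mod_cast hz
    have key : ∀ k : ℕ, (∫⁻ p in Ioi (0 : ℝ), ‖f k p‖₊) ≤
        (‖z‖₊ : ℝ≥0∞) ^ (k + 1) * ∫⁻ p in Ioi (0 : ℝ), ‖F p‖₊ := by
      intro k
      rw [← lintegral_const_mul' _ _ (ENNReal.pow_ne_top ENNReal.coe_ne_top)]
      refine lintegral_mono_ae ?_
      filter_upwards [ae_restrict_mem measurableSet_Ioi] with p hp
      have hexp : ‖Complex.exp (-((k + 1 : ℕ) : ℂ) * p)‖₊ ≤ 1 := by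
        have : ‖Complex.exp (-((k + 1 : ℕ) : ℂ) * p)‖ ≤ 1 := by
          rw [Complex.norm_exp]
          refine exp_le_one_iff.mpr ?_
          have : (-((k + 1 : ℕ) : ℂ) * p).re = -((k + 1 : ℕ) : ℝ) * p := by simp
          rw [this]
          have hp' : (0 : ℝ) < p := hp
          have hk : (0:ℝ) ≤ ((k+1 : ℕ) : ℝ) := Nat.cast_nonneg _
          nlinarith
        exact_mod_cast this
      have : (‖f k p‖₊ : ℝ≥0∞) ≤ (‖z‖₊ : ℝ≥0∞) ^ (k + 1) * ‖F p‖₊ := by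
        have : ‖f k p‖₊ = ‖Complex.exp (-((k + 1 : ℕ) : ℂ) * p)‖₊ * ‖F p‖₊ * ‖z‖₊ ^ (k + 1) := by
          simp [hf_def, nnnorm_mul, nnnorm_pow]
        rw [this, ENNReal.coe_mul, ENNReal.coe_mul, ENNReal.coe_pow]
        calc (‖Complex.exp (-((k + 1 : ℕ) : ℂ) * p)‖₊ : ℝ≥0∞) * ‖F p‖₊ * ‖z‖₊ ^ (k + 1)
            ≤ 1 * ‖F p‖₊ * ‖z‖₊ ^ (k + 1) := by
              gcongr
              exact_mod_cast hexp
          _ = (‖z‖₊ : ℝ≥0∞) ^ (k + 1) * ‖F p‖₊ := by ring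
      exact this
    refine ne_top_of_le_ne_top ?_ (ENNReal.tsum_le_tsum key)
    rw [ENNReal.tsum_mul_right]
    refine ENNReal.mul_ne_top ?_ hI
    have : (∑' k : ℕ, (‖z‖₊ : ℝ≥0∞) ^ (k + 1)) ≤ ∑' k : ℕ, (‖z‖₊ : ℝ≥0∞) ^ k :=
      ENNReal.tsum_le_tsum fun k => pow_le_pow_of_le_one (by positivity) hr.le (by omega)
    refine ne_top_of_le_ne_top ?_ this
    rw [ENNReal.tsum_geometric]
    refine ENNReal.inv_ne_top.mpr ?_
    rw [ne_eq, tsub_eq_zero_iff_le]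
    exact not_le.mpr hr
  -- Step B: swap sum and integral
  have stepB : ∑' k : ℕ, ∫ p in Ioi (0 : ℝ), f k p = ∫ p in Ioi (0 : ℝ), ∑' k : ℕ, f k p :=
    (integral_tsum hfm hsum).symm
  -- Step C: pointwise geometric sum
  have stepC : ∫ p in Ioi (0 : ℝ), (∑' k : ℕ, f k p) = ∫ p in Ioi (0 : ℝ), g p := by
    refine setIntegral_congr_fun measurableSet_Ioi fun p hp => ?_
    have hp' : (0 : ℝ) < p := hp
    have hwp := hw p hp'.le
    have hfk : ∀ k : ℕ, f k p = (z * Complex.exp (-(p : ℂ))) ^ (k + 1) * F p := by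
      intro k
      have : Complex.exp (-((k + 1 : ℕ) : ℂ) * p) = Complex.exp (-(p : ℂ)) ^ (k + 1) := by
        rw [← Complex.exp_nat_mul]
        ring_nf
      simp only [hf_def, this, mul_pow]
      ring
    simp only [hfk]
    rw [tsum_mul_right]
    have : (∑' k : ℕ, (z * Complex.exp (-(p : ℂ))) ^ (k + 1)) =
        (z * Complex.exp (-(p : ℂ))) * (1 - z * Complex.exp (-(p : ℂ)))⁻¹ := by
      calc (∑' k : ℕ, (z * Complex.exp (-(p : ℂ))) ^ (k + 1))
          = ∑' k : ℕ, (z * Complex.exp (-(p : ℂ))) * (z * Complex.exp (-(p : ℂ))) ^ k := by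
            congr 1; ext k; ring
        _ = (z * Complex.exp (-(p : ℂ))) * ∑' k : ℕ, (z * Complex.exp (-(p : ℂ))) ^ k :=
            tsum_mul_left
        _ = (z * Complex.exp (-(p : ℂ))) * (1 - z * Complex.exp (-(p : ℂ)))⁻¹ := by
            rw [tsum_geometric_of_norm_lt_one hwp]
    rw [this]
  -- Step D: change of variables p = log (1 + s)
  have himg : (fun s : ℝ => Real.log (1 + s)) '' Ioi 0 = Ioi 0 := by
    ext y
    constructor
    · rintro ⟨s, hs, rfl⟩
      have hs' : (0 : ℝ) < s := hs
      exact Real.log_pos (by linarith)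
    · intro hy
      have hy' : (0 : ℝ) < y := hy
      refine ⟨Real.exp y - 1, ?_, ?_⟩
      · have : (1 : ℝ) < Real.exp y := by
          calc (1 : ℝ) = Real.exp 0 := Real.exp_zero.symm
            _ < Real.exp y := Real.exp_lt_exp.mpr hy'
        simpa [mem_Ioi] using sub_pos.mpr this
      · show Real.log (1 + (Real.exp y - 1)) = y
        rw [show (1:ℝ) + (Real.exp y - 1) = Real.exp y by ring, Real.log_exp]
  have hderiv : ∀ x ∈ Ioi (0 : ℝ),
      HasDerivWithinAt (fun s : ℝ => Real.log (1 + s)) ((1 + x)⁻¹) (Ioi 0) x := by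
    intro x hx
    have hx' : (0 : ℝ) < x := hx
    have h : HasDerivAt (fun s : ℝ => 1 + s) 1 x := (hasDerivAt_id x).const_add 1
    have := h.log (by linarith : (1 : ℝ) + x ≠ 0)
    simpa [one_div] using this.hasDerivWithinAt
  have hinj : InjOn (fun s : ℝ => Real.log (1 + s)) (Ioi 0) := by
    intro a ha b hb h
    have ha' : (0 : ℝ) < a := ha
    have hb' : (0 : ℝ) < b := hb
    have := congrArg Real.exp h
    rw [Real.exp_log (by linarith), Real.exp_log (by linarith)] at this
    linarith
  have stepD : ∫ p in Ioi (0 : ℝ), g p =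
      ∫ s in Ioi (0 : ℝ), |(1 + s)⁻¹| • g (Real.log (1 + s)) := by
    conv_lhs => rw [← himg]
    exact integral_image_eq_integral_abs_deriv_smul measurableSet_Ioi hderiv hinj g
  -- Step E: simplify the integrand and pull out z
  have stepE : ∫ s in Ioi (0 : ℝ), |(1 + s)⁻¹| • g (Real.log (1 + s)) =
      z * ∫ s in Ioi (0 : ℝ),
        F (Real.log (1 + s)) / (((1 + s : ℝ) : ℂ) * (((1 + s : ℝ) : ℂ) - z)) := by
    rw [← integral_const_mul]
    refine setIntegral_congr_fun measurableSet_Ioi fun s hs => ?_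
    have hs' : (0 : ℝ) < s := hs
    have h1s : (0 : ℝ) < 1 + s := by linarith
    have hexp : Complex.exp (-((Real.log (1 + s) : ℝ) : ℂ)) = (((1 + s)⁻¹ : ℝ) : ℂ) := by
      rw [← Complex.ofReal_neg, ← Complex.ofReal_exp, Real.exp_neg, Real.exp_log h1s]
    have hne1 : (((1 + s : ℝ)) : ℂ) ≠ 0 := by
      exact_mod_cast h1s.ne'
    have hne2 : (((1 + s : ℝ)) : ℂ) - z ≠ 0 := by
      intro h
      have : ((1 + s : ℝ) : ℂ) = z := by linear_combination h
      have : ‖((1 + s : ℝ) : ℂ)‖ < 1 := this ▸ hz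
      rw [Complex.norm_real, Real.norm_eq_abs, abs_of_pos h1s] at this
      linarith
    have habs : |(1 + s)⁻¹| = (1 + s)⁻¹ := abs_of_pos (by positivity)
    have hne1' : (1 : ℂ) + (s : ℂ) ≠ 0 := by push_cast at hne1 ⊢; exact hne1
    have hne2' : (1 : ℂ) + (s : ℂ) - z ≠ 0 := by push_cast at hne2 ⊢; exact hne2
    rw [habs, hg_def]
    simp only [hexp, Complex.real_smul, Complex.ofReal_inv]
    push_cast
    rw [show (1 : ℂ) - z * ((1 : ℂ) + (s : ℂ))⁻¹ =
        ((1 : ℂ) + (s : ℂ) - z) * ((1 : ℂ) + (s : ℂ))⁻¹ by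
      rw [sub_mul, mul_inv_cancel₀ hne1']]
    rw [mul_inv, inv_inv, div_eq_mul_inv, mul_inv]
    field_simp
  calc ∑' k : ℕ, c (k + 1) * z ^ (k + 1)
      = ∑' k : ℕ, ∫ p in Ioi (0 : ℝ), f k p := by
        congr 1; ext k; exact stepA k
    _ = ∫ p in Ioi (0 : ℝ), ∑' k : ℕ, f k p := stepB
    _ = ∫ p in Ioi (0 : ℝ), g p := stepC
    _ = ∫ s in Ioi (0 : ℝ), |(1 + s)⁻¹| • g (Real.log (1 + s)) := stepD
    _ = _ := stepE
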